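/- Let k > 0 and B > 0 be real constants. Then there exists a constant D > 0 such that for all natural numbers n ≥ 1: exp(-B·n) · ((n+1)^((k+1)/k) - n^((k+1)/k) + 1) · (1 + (B/2)·n^(-1/k))^(n^((k+1)/k)) ≤ D · exp(-B·n/4). -/

import Mathlib

open Real

theorem stmt2 (k B : ℝ) (hk : 0 < k) (hB : 0 < B) :
    ∃ D : ℝ, 0 < D ∧ ∀ n : ℕ, 1 ≤ n →
      Real.exp (-B * n) * (((n : ℝ) + 1) ^ ((k + 1) / k) - (n : ℝ) ^ ((k + 1) / k) + 1) *
        (1 + (B / 2) * (n : ℝ) ^ (-(1 : ℝ) / k)) ^ ((n : ℝ) ^ ((k + 1) / k)) ≤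
      D * Real.exp (-B * n / 4) := by
  set α : ℝ := (k + 1) / k with hα
  have hαpos : 0 < α := div_pos (by linarith) hk
  set m : ℕ := ⌈α⌉₊ with hm
  refine ⟨(4 / B) ^ m * (m.factorial : ℝ) * Real.exp (B / 4) + 1, by positivity, ?_⟩
  intro n hn
  have hn1 : (1 : ℝ) ≤ (n : ℝ) := by exact_mod_cast hn
  have hnpos : (0 : ℝ) < n := by linarith
  -- Step 1: bound the rpow factor by exp (B*n/2)
  have hx : (0 : ℝ) ≤ (B / 2) * (n : ℝ) ^ (-(1 : ℝ) / k) := by positivity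
  have h1 : (1 + (B / 2) * (n : ℝ) ^ (-(1 : ℝ) / k)) ^ ((n : ℝ) ^ α)
      ≤ Real.exp (B * n / 2) := by
    have hle : (1 + (B / 2) * (n : ℝ) ^ (-(1 : ℝ) / k))
        ≤ Real.exp ((B / 2) * (n : ℝ) ^ (-(1 : ℝ) / k)) := by
      have := Real.add_one_le_exp ((B / 2) * (n : ℝ) ^ (-(1 : ℝ) / k))
      linarith
    calc (1 + (B / 2) * (n : ℝ) ^ (-(1 : ℝ) / k)) ^ ((n : ℝ) ^ α)
        ≤ (Real.exp ((B / 2) * (n : ℝ) ^ (-(1 : ℝ) / k))) ^ ((n : ℝ) ^ α) := by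
          apply Real.rpow_le_rpow (by linarith) hle (by positivity)
      _ = Real.exp ((B / 2) * (n : ℝ) ^ (-(1 : ℝ) / k) * (n : ℝ) ^ α) := by
          rw [← Real.exp_mul]
      _ = Real.exp (B * n / 2) := by
          congr 1
          rw [mul_assoc, ← Real.rpow_add hnpos]
          have : -(1 : ℝ) / k + α = 1 := by
            have hkα : k * α = k + 1 := by rw [hα]; field_simp
            field_simp [hα]; linarith
          rw [this, Real.rpow_one]; ring
  -- Step 2: bound middle factor
  have hmid0 : 0 ≤ ((n : ℝ) + 1) ^ α - (n : ℝ) ^ α + 1 := by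
    have := Real.rpow_le_rpow (le_of_lt hnpos) (by linarith : (n : ℝ) ≤ n + 1) hαpos.le
    linarith
  have h2 : ((n : ℝ) + 1) ^ α - (n : ℝ) ^ α + 1
      ≤ ((4 / B) ^ m * (m.factorial : ℝ) * Real.exp (B / 4)) * Real.exp (B * n / 4) + 1 := by
    have hpow : ((n : ℝ) + 1) ^ α ≤ ((n : ℝ) + 1) ^ (m : ℝ) := by
      apply Real.rpow_le_rpow_of_exponent_le (by linarith) (Nat.le_ceil α)
    have hfac : (((B / 4) * ((n : ℝ) + 1)) ^ m : ℝ) / (m.factorial : ℝ) ≤ Real.exp ((B / 4) * ((n : ℝ) + 1)) :=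
      Real.pow_div_factorial_le_exp _ (by positivity) m
    have hmfac : (0 : ℝ) < (m.factorial : ℝ) := by exact_mod_cast Nat.factorial_pos m
    have : ((n : ℝ) + 1) ^ m ≤ (4 / B) ^ m * (m.factorial : ℝ) * Real.exp ((B / 4) * ((n : ℝ) + 1)) := by
      have h' : ((B / 4) * ((n : ℝ) + 1)) ^ m ≤ (m.factorial : ℝ) * Real.exp ((B / 4) * ((n : ℝ) + 1)) := by
        rw [div_le_iff₀ hmfac] at hfac; linarith [hfac]
      have hexp : ((B / 4) * ((n : ℝ) + 1)) ^ m = (B / 4) ^ m * ((n : ℝ) + 1) ^ m := by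
        rw [mul_pow]
      have hB4 : (0 : ℝ) < (B / 4) ^ m := by positivity
      have := (mul_le_mul_iff_right₀ hB4).mpr (le_refl (((n : ℝ) + 1) ^ m))
      calc ((n : ℝ) + 1) ^ m = (4 / B) ^ m * ((B / 4) ^ m * ((n : ℝ) + 1) ^ m) := by
            rw [← mul_assoc, ← mul_pow]
            field_simp
            rw [one_pow]
        _ = (4 / B) ^ m * ((B / 4) * ((n : ℝ) + 1)) ^ m := by rw [hexp]
        _ ≤ (4 / B) ^ m * ((m.factorial : ℝ) * Real.exp ((B / 4) * ((n : ℝ) + 1))) := by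
            apply mul_le_mul_of_nonneg_left h' (by positivity)
        _ = (4 / B) ^ m * (m.factorial : ℝ) * Real.exp ((B / 4) * ((n : ℝ) + 1)) := by ring
    have hexpeq : Real.exp ((B / 4) * ((n : ℝ) + 1)) = Real.exp (B / 4) * Real.exp (B * n / 4) := by
      rw [← Real.exp_add]; ring_nf
    have hnα : (0 : ℝ) ≤ (n : ℝ) ^ α := by positivity
    have hcast : ((n : ℝ) + 1) ^ (m : ℝ) = ((n : ℝ) + 1) ^ m := by
      rw [Real.rpow_natCast]
    calc ((n : ℝ) + 1) ^ α - (n : ℝ) ^ α + 1 ≤ ((n : ℝ) + 1) ^ α + 1 := by linarith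
      _ ≤ ((n : ℝ) + 1) ^ m + 1 := by rw [← hcast]; linarith
      _ ≤ (4 / B) ^ m * (m.factorial : ℝ) * Real.exp ((B / 4) * ((n : ℝ) + 1)) + 1 := by linarith
      _ = ((4 / B) ^ m * (m.factorial : ℝ) * Real.exp (B / 4)) * Real.exp (B * n / 4) + 1 := by
          rw [hexpeq]; ring
  -- Combine
  set C : ℝ := (4 / B) ^ m * (m.factorial : ℝ) * Real.exp (B / 4) with hC
  have hCpos : 0 < C := by positivity
  have key : Real.exp (-B * n) * (((n : ℝ) + 1) ^ α - (n : ℝ) ^ α + 1) *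
      (1 + (B / 2) * (n : ℝ) ^ (-(1 : ℝ) / k)) ^ ((n : ℝ) ^ α)
      ≤ (C * Real.exp (B * n / 4) + 1) * (Real.exp (-B * n) * Real.exp (B * n / 2)) := by
    have e1 : (0 : ℝ) < Real.exp (-B * n) := Real.exp_pos _
    calc Real.exp (-B * n) * (((n : ℝ) + 1) ^ α - (n : ℝ) ^ α + 1) *
        (1 + (B / 2) * (n : ℝ) ^ (-(1 : ℝ) / k)) ^ ((n : ℝ) ^ α)
        ≤ Real.exp (-B * n) * (((n : ℝ) + 1) ^ α - (n : ℝ) ^ α + 1) *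
          Real.exp (B * n / 2) := by
          apply mul_le_mul_of_nonneg_left h1 (by positivity)
      _ ≤ Real.exp (-B * n) * ((C * Real.exp (B * n / 4) + 1)) * Real.exp (B * n / 2) := by
          apply mul_le_mul_of_nonneg_right _ (Real.exp_pos _).le
          exact mul_le_mul_of_nonneg_left h2 e1.le
      _ = (C * Real.exp (B * n / 4) + 1) * (Real.exp (-B * n) * Real.exp (B * n / 2)) := by ring
  refine key.trans ?_
  rw [← Real.exp_add]
  have hexp2 : -B * n + B * n / 2 = -B * n / 2 := by ring
  rw [hexp2]
  have : (C * Real.exp (B * n / 4) + 1) * Real.exp (-B * n / 2)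
      = C * Real.exp (-B * n / 4) + Real.exp (-B * n / 2) := by
    rw [add_mul, one_mul, mul_assoc, ← Real.exp_add]
    congr 2
    ring
  rw [this]
  have hle : Real.exp (-B * n / 2) ≤ Real.exp (-B * n / 4) := by
    apply Real.exp_le_exp.mpr
    have : 0 ≤ B * n := by positivity
    linarith
  linarith
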